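/- arXiv:2009.11041 — 4 statements merged into one kernel-verified Lean document; each statement's English description precedes it below -/
import Mathlib

section
/- Let F be an m-dimensional LFT with parameter (i, σ, p⃗, q⃗) and s = σ^{-1}(i), with ord_p(q_s) ≤ 0. Suppose that for every k ∈ {1,…,m}: p_k ≠ 0, ord_p(p_k) ≥ 0, and if ord_p(q_k) > 0 then ord_p(p_k) = 0. If there exists x̄ ∈ D_m' such that F(x̄) ∈ D_m', then F is hyperbolic. -/
open MeasureTheory Filter Topology
open scoped Classical

noncomputable section

namespace PadicCF

variable (p : ℕ) [Fact p.Prime]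

/-- `pℤ_p`, the maximal ideal of the `p`-adic integers, viewed inside `ℚ_p`. -/
def pZ : Set ℚ_[p] := {x | ‖x‖ ≤ (p : ℝ)⁻¹}

/-- `D_m`: tuples `(x_1, …, x_m)` such that `1, x_1, …, x_m` are linearly
independent over `ℤ`. -/
def Dm (m : ℕ) : Set (Fin m → ℚ_[p]) :=
  {x | ∀ (c : ℤ) (a : Fin m → ℤ), (c : ℚ_[p]) + ∑ j, (a j : ℚ_[p]) * x j = 0 →
    c = 0 ∧ ∀ j, a j = 0}

/-- `D_m' = D_m ∩ (pℤ_p)^m`. -/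
def Dm' (m : ℕ) : Set (Fin m → ℚ_[p]) := {x | x ∈ Dm p m ∧ ∀ j, x j ∈ pZ p}

variable {m : ℕ}

/-- The `m`-dimensional linear fractional transformation with parameter `(i, σ, pv, qv)`. -/
def LFT (i : Fin m) (σ : Equiv.Perm (Fin m)) (pv qv : Fin m → ℚ)
    (x : Fin m → ℚ_[p]) : Fin m → ℚ_[p] := fun k =>
  if k = σ⁻¹ i then (pv k : ℚ_[p]) / x i - (qv k : ℚ_[p])
  else (pv k : ℚ_[p]) * x (σ k) / x i - (qv k : ℚ_[p])

/-- The inverse of the LFT with parameter `(i, σ, pv, qv)`, given by the explicit formulas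
`x_i = p_s/(y_s + q_s)` and `x_k = p_s (y_t + q_t) / (p_t (y_s + q_s))` for `k ≠ i`,
where `s = σ⁻¹ i`, `t = σ⁻¹ k`. -/
def LFTinv (i : Fin m) (σ : Equiv.Perm (Fin m)) (pv qv : Fin m → ℚ)
    (y : Fin m → ℚ_[p]) : Fin m → ℚ_[p] := fun k =>
  if k = i then (pv (σ⁻¹ i) : ℚ_[p]) / (y (σ⁻¹ i) + (qv (σ⁻¹ i) : ℚ_[p]))
  else (pv (σ⁻¹ i) : ℚ_[p]) * (y (σ⁻¹ k) + (qv (σ⁻¹ k) : ℚ_[p])) /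
        ((pv (σ⁻¹ k) : ℚ_[p]) * (y (σ⁻¹ i) + (qv (σ⁻¹ i) : ℚ_[p])))

/-- Hyperbolicity of an LFT, Definition 2.6 of the paper.  Here `ord` is `padicValRat p`;
the case `q_k = 0` (where `ord q_k = ∞` by convention) is listed explicitly in (iv). -/
def Hyperbolic (i : Fin m) (σ : Equiv.Perm (Fin m)) (pv qv : Fin m → ℚ) : Prop :=
  (∀ k, pv k ≠ 0 ∧ 0 ≤ padicValRat p (pv k)) ∧
  (qv (σ⁻¹ i) ≠ 0 ∧ padicValRat p (qv (σ⁻¹ i)) ≤ 0 ∧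
    0 < padicValRat p (pv (σ⁻¹ i) / qv (σ⁻¹ i))) ∧
  (∀ k, k ≠ σ⁻¹ i → qv k ≠ 0 → padicValRat p (qv k) ≤ 0 →
    padicValRat p (pv k / qv k) < padicValRat p (pv (σ⁻¹ i) / qv (σ⁻¹ i))) ∧
  (∀ k, k ≠ σ⁻¹ i → (qv k = 0 ∨ 0 < padicValRat p (qv k)) →
    padicValRat p (pv k) < padicValRat p (pv (σ⁻¹ i) / qv (σ⁻¹ i)))

/-- `F⁻¹(D_m')`, i.e. the image of `D_m'` under the (formula-defined) inverse of the LFT. -/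
def invImg (i : Fin m) (σ : Equiv.Perm (Fin m)) (pv qv : Fin m → ℚ) :
    Set (Fin m → ℚ_[p]) := LFTinv p i σ pv qv '' Dm' p m

/-- A family of hyperbolic LFTs indexed by `Λ` is an `m`-dimensional continued fraction
system if the sets `F_λ⁻¹(D_m')` form a partition of `D_m'`. -/
def IsCFSystem (m : ℕ) {Λ : Type*} (iF : Λ → Fin m) (σF : Λ → Equiv.Perm (Fin m))
    (pF qF : Λ → Fin m → ℚ) : Prop :=
  (∀ l, Hyperbolic p (iF l) (σF l) (pF l) (qF l)) ∧
  (⋃ l, invImg p (iF l) (σF l) (pF l) (qF l)) = Dm' p m ∧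
  (Pairwise fun l l' => Disjoint (invImg p (iF l) (σF l) (pF l) (qF l))
      (invImg p (iF l') (σF l') (pF l') (qF l')))

/-- The sup-norm `|z|_p = max_j |z_j|_p` on `ℚ_p^m`. -/
def supNorm (z : Fin m → ℚ_[p]) : NNReal := Finset.univ.sup fun j => ‖z j‖₊

/-- `v ∈ ℚ` is the integral part of `α ∈ ℚ_p` if it is of the form
`∑_{n=0}^{N} d_n p^{-n}` with digits `d_n ∈ {0, …, p-1}` and `α - v ∈ pℤ_p`. -/
def IsIntegralPart (α : ℚ_[p]) (v : ℚ) : Prop :=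
  (∃ N : ℕ, ∃ d : ℕ → ℕ, (∀ n, d n < p) ∧
      v = ∑ n ∈ Finset.range (N + 1), (d n : ℚ) / (p : ℚ) ^ n) ∧
  ‖α - (v : ℚ_[p])‖ ≤ (p : ℝ)⁻¹

/-- The integral part `⌊α⌋_p ∈ ℚ` of a `p`-adic number. -/
def padicFloor (α : ℚ_[p]) : ℚ :=
  if h : ∃ v : ℚ, IsIntegralPart p α v then h.choose else 0

/-- `J_N`: rationals `∑_{n=0}^{N} c_n p^{-n}` with digits `c_n ∈ {0,…,p-1}` and `c_N ≠ 0`. -/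
def Jset (N : ℕ) : Set ℚ :=
  {v | ∃ c : ℕ → ℕ, (∀ n, c n < p) ∧ c N ≠ 0 ∧
      v = ∑ n ∈ Finset.range (N + 1), (c n : ℚ) / (p : ℚ) ^ n}

/-- The exponent `k = max(ord_p x - ℓ, 0)`, with `k = 0` when `ℓ = ∞`. -/
def kexp (ℓ : ℕ∞) (x : ℚ_[p]) : ℤ :=
  if ℓ = ⊤ then 0 else max (x.valuation - ((WithTop.untopD 0 ℓ : ℕ) : ℤ)) 0

/-- The transformation `T_ℓ : pℤ_p → pℤ_p`, `T_ℓ(x) = p^k/x - ⌊p^k/x⌋_p` with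
`k = max(ord_p x - ℓ, 0)`, `T_ℓ(0) = 0`. -/
def Tell (ℓ : ℕ∞) (x : ℚ_[p]) : ℚ_[p] :=
  if x = 0 then 0
  else (p : ℚ_[p]) ^ kexp p ℓ x / x - (padicFloor p ((p : ℚ_[p]) ^ kexp p ℓ x / x) : ℚ_[p])

/-- The one-dimensional set `D_1' ⊆ pℤ_p` (elements of `pℤ_p` irrational over `ℤ`). -/
def D1 : Set ℚ_[p] :=
  {x | (∀ c a : ℤ, (c : ℚ_[p]) + (a : ℚ_[p]) * x = 0 → c = 0 ∧ a = 0) ∧ x ∈ pZ p}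

/-- Index set of the continued fraction system of `T_ℓ`:
pairs `(k, v)` with `k > 0, v ∈ J_ℓ`, or `k = 0` and `v ∈ J_1 ∪ ⋯ ∪ J_ℓ`. -/
def SysIndex (ℓ : ℕ∞) : Set (ℕ × ℚ) :=
  {kv | (0 < kv.1 ∧ ∃ n : ℕ, (n : ℕ∞) = ℓ ∧ kv.2 ∈ Jset p n) ∨
        (kv.1 = 0 ∧ ∃ n : ℕ, 1 ≤ n ∧ (n : ℕ∞) ≤ ℓ ∧ kv.2 ∈ Jset p n)}

/-- The exponent `r = max(-ℓ - ord_p(x_{k+1}) + ord_p(x_1), 0)` (`0` if `ℓ = ∞`). -/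
def rexp (ℓ : ℕ∞) (x1 xk : ℚ_[p]) : ℤ :=
  if ℓ = ⊤ then 0 else max (-((WithTop.untopD 0 ℓ : ℕ) : ℤ) - xk.valuation + x1.valuation) 0

/-- The multidimensional transformation `T_{ℓ,m}` on `D_m'`. -/
def Tellm (ℓ : ℕ∞) (x : Fin m → ℚ_[p]) : Fin m → ℚ_[p] := fun k =>
  if h : (k : ℕ) + 1 = m then Tell p ℓ (x ⟨0, k.pos⟩)
  else
    (p : ℚ_[p]) ^ rexp p ℓ (x ⟨0, k.pos⟩)
        (x ⟨(k : ℕ) + 1, lt_of_le_of_ne (Nat.succ_le_of_lt k.isLt) h⟩) *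
        x ⟨(k : ℕ) + 1, lt_of_le_of_ne (Nat.succ_le_of_lt k.isLt) h⟩ / x ⟨0, k.pos⟩ -
      (padicFloor p
        ((p : ℚ_[p]) ^ rexp p ℓ (x ⟨0, k.pos⟩)
            (x ⟨(k : ℕ) + 1, lt_of_le_of_ne (Nat.succ_le_of_lt k.isLt) h⟩) *
          x ⟨(k : ℕ) + 1, lt_of_le_of_ne (Nat.succ_le_of_lt k.isLt) h⟩ / x ⟨0, k.pos⟩) : ℚ_[p])

/-- The vector of powers `p⃗^{(ℓ,x)}` of Definition 3.13. -/
def pParam (ℓ : ℕ∞) (x : Fin m → ℚ_[p]) (k : Fin m) : ℚ :=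
  if ℓ = ⊤ then 1
  else if h : (k : ℕ) + 1 = m then
    (p : ℚ) ^ max (-((WithTop.untopD 0 ℓ : ℕ) : ℤ) + (x ⟨0, k.pos⟩).valuation) 0
  else
    (p : ℚ) ^ max (-((WithTop.untopD 0 ℓ : ℕ) : ℤ) -
      (x ⟨(k : ℕ) + 1, lt_of_le_of_ne (Nat.succ_le_of_lt k.isLt) h⟩).valuation +
      (x ⟨0, k.pos⟩).valuation) 0

/-- The vector `q⃗^{(ℓ,x)}` of Definition 3.13. -/
def qParam (ℓ : ℕ∞) (x : Fin m → ℚ_[p]) (k : Fin m) : ℚ :=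
  if h : (k : ℕ) + 1 = m then padicFloor p ((pParam p ℓ x k : ℚ_[p]) / x ⟨0, k.pos⟩)
  else padicFloor p ((pParam p ℓ x k : ℚ_[p]) *
    x ⟨(k : ℕ) + 1, lt_of_le_of_ne (Nat.succ_le_of_lt k.isLt) h⟩ / x ⟨0, k.pos⟩)

/-- The `j`-th convergent `π(α; j) = F⁻¹_{ψ_0} ∘ ⋯ ∘ F⁻¹_{ψ_j} (0̄)`. -/
def convergent (Finv : ℕ → (Fin m → ℚ_[p]) → Fin m → ℚ_[p]) (j : ℕ) : Fin m → ℚ_[p] :=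
  (List.range (j + 1)).foldr (fun t acc => Finv t acc) 0

/-- The exponent `h = max_k (ord_p(p_s) - ord_p(p_k))` of Section 5. -/
def hVal (i : Fin m) (σ : Equiv.Perm (Fin m)) (pv : Fin m → ℚ) : ℤ :=
  Finset.univ.sup' ⟨i, Finset.mem_univ i⟩
    fun k => padicValRat p (pv (σ⁻¹ i)) - padicValRat p (pv k)

/-- The cylinders `V_k^{(y)}` of Section 5. -/
def Vset (i : Fin m) (σ : Equiv.Perm (Fin m)) (pv qv : Fin m → ℚ) (n : ℕ)
    (a : Fin m → ℚ_[p]) (y : ℕ) (k : Fin m) : Set ℚ_[p] :=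
  if k = i then
    {t | ∃ w : ℚ_[p], ‖w‖ ≤ (p : ℝ) ^ (-(hVal p i σ pv)) ∧
      t = (pv (σ⁻¹ i) : ℚ_[p]) / (a (σ⁻¹ i) + (qv (σ⁻¹ i) : ℚ_[p])) +
        (p : ℚ_[p]) ^ ((n : ℤ) + padicValRat p (pv (σ⁻¹ i)) -
          2 * padicValRat p (qv (σ⁻¹ i))) * ((y : ℚ_[p]) + w)}
  else
    {t | ∃ w : ℚ_[p], ‖w‖ ≤ (p : ℝ) ^ (-(n : ℤ)) ∧
      t = ((pv (σ⁻¹ i) : ℚ_[p]) / (a (σ⁻¹ i) + (qv (σ⁻¹ i) : ℚ_[p])) +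
        (p : ℚ_[p]) ^ ((n : ℤ) + padicValRat p (pv (σ⁻¹ i)) -
          2 * padicValRat p (qv (σ⁻¹ i))) * (y : ℚ_[p])) *
        (a (σ⁻¹ k) + (qv (σ⁻¹ k) : ℚ_[p])) / (pv (σ⁻¹ k) : ℚ_[p])}

end PadicCF

namespace PadicCF

open MeasureTheory Filter Topology
open scoped ENNReal NNReal

variable (p : ℕ) [Fact p.Prime]

lemma normq (a : ℚ) (ha : a ≠ 0) : ‖(a : ℚ_[p])‖ = (p:ℝ) ^ (-padicValRat p a) := by
  rw [Padic.eq_padicNorm, padicNorm.eq_zpow_of_nonzero ha]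
  push_cast; ring

lemma one_lt_pr : (1:ℝ) < p := by exact_mod_cast (Fact.out : p.Prime).one_lt

lemma val_lt_iff (a b : ℚ) (ha : a ≠ 0) (hb : b ≠ 0) :
    padicValRat p a < padicValRat p b ↔ ‖(b : ℚ_[p])‖ < ‖(a : ℚ_[p])‖ := by
  rw [normq p a ha, normq p b hb, zpow_lt_zpow_iff_right₀ (one_lt_pr p), neg_lt_neg_iff]

lemma val_pos_iff (a : ℚ) (ha : a ≠ 0) :
    0 < padicValRat p a ↔ ‖(a : ℚ_[p])‖ < 1 := by
  have := val_lt_iff p 1 a one_ne_zero ha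
  simpa using this

lemma one_le_norm (a : ℚ) (ha : a ≠ 0) (h : padicValRat p a ≤ 0) :
    (1:ℝ) ≤ ‖(a : ℚ_[p])‖ := by
  rw [normq p a ha]
  calc (1:ℝ) = (p:ℝ) ^ (0:ℤ) := by simp
  _ ≤ (p:ℝ) ^ (-padicValRat p a) := by
      apply zpow_le_zpow_right₀ (le_of_lt (one_lt_pr p))
      omega

theorem hyperbolic_of_exists (m : ℕ) (hm : 1 ≤ m) (i : Fin m) (σ : Equiv.Perm (Fin m))
    (pv qv : Fin m → ℚ)
    (hqs : qv (σ⁻¹ i) ≠ 0) (hqs' : padicValRat p (qv (σ⁻¹ i)) ≤ 0)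
    (hp1 : ∀ k, pv k ≠ 0) (hp2 : ∀ k, 0 ≤ padicValRat p (pv k))
    (hp3 : ∀ k, (qv k = 0 ∨ 0 < padicValRat p (qv k)) → padicValRat p (pv k) = 0)
    (hex : ∃ x ∈ Dm' p m, LFT p i σ pv qv x ∈ Dm' p m) :
    Hyperbolic p i σ pv qv := by
  obtain ⟨x, ⟨hxD, hxp⟩, hyD, hyp⟩ := hex
  have hprime : p.Prime := Fact.out
  have hinv : (p:ℝ)⁻¹ < 1 := by
    rw [inv_lt_one_iff₀]; right; exact one_lt_pr p
  -- every coordinate of x is nonzero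
  have hxne : ∀ j, x j ≠ 0 := by
    intro j hj
    have hsum : ((0:ℤ) : ℚ_[p]) +
        ∑ j', ((if j' = j then (1:ℤ) else 0 : ℤ) : ℚ_[p]) * x j' = 0 := by
      rw [Int.cast_zero, zero_add, Finset.sum_eq_single j]
      · simp [hj]
      · intro b _ hb; simp [hb]
      · simp
    have h2 := (hxD 0 _ hsum).2 j
    simp at h2
  have hxle : ∀ j, ‖x j‖ ≤ (p:ℝ)⁻¹ := fun j => hxp j
  have hxlt : ∀ j, ‖x j‖ < 1 := fun j => lt_of_le_of_lt (hxle j) hinv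
  have hxpos : ∀ j, (0:ℝ) < ‖x j‖ := fun j => norm_pos_iff.mpr (hxne j)
  -- cast nonzero
  have hpc : ∀ k, ((pv k : ℚ_[p])) ≠ 0 := fun k => by
    exact_mod_cast Rat.cast_ne_zero.mpr (hp1 k)
  have hqsc : ((qv (σ⁻¹ i) : ℚ_[p])) ≠ 0 := Rat.cast_ne_zero.mpr hqs
  -- key step for the s-coordinate
  have hys : ‖(pv (σ⁻¹ i) : ℚ_[p]) / x i - (qv (σ⁻¹ i) : ℚ_[p])‖ ≤ (p:ℝ)⁻¹ := by
    have := hyp (σ⁻¹ i)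
    simpa [LFT, pZ] using this
  have hqs1 : (1:ℝ) ≤ ‖((qv (σ⁻¹ i) : ℚ) : ℚ_[p])‖ := one_le_norm p _ hqs hqs'
  have hyslt : ‖(pv (σ⁻¹ i) : ℚ_[p]) / x i - (qv (σ⁻¹ i) : ℚ_[p])‖ <
      ‖((qv (σ⁻¹ i) : ℚ) : ℚ_[p])‖ := lt_of_le_of_lt hys (lt_of_lt_of_le hinv hqs1)
  have keys : ‖(pv (σ⁻¹ i) : ℚ_[p]) / x i‖ = ‖((qv (σ⁻¹ i) : ℚ) : ℚ_[p])‖ := by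
    have heq : (pv (σ⁻¹ i) : ℚ_[p]) / x i =
        ((pv (σ⁻¹ i) : ℚ_[p]) / x i - (qv (σ⁻¹ i) : ℚ_[p])) + (qv (σ⁻¹ i) : ℚ_[p]) := by
      ring
    rw [heq, Padic.add_eq_max_of_ne (ne_of_lt hyslt), max_eq_right (le_of_lt hyslt)]
  -- norm of p_s/q_s equals ‖x i‖
  have hfracs : ‖((pv (σ⁻¹ i) / qv (σ⁻¹ i) : ℚ) : ℚ_[p])‖ = ‖x i‖ := by
    rw [norm_div] at keys
    have h1 : ‖(pv (σ⁻¹ i) : ℚ_[p])‖ = ‖((qv (σ⁻¹ i) : ℚ) : ℚ_[p])‖ * ‖x i‖ :=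
      (div_eq_iff (ne_of_gt (hxpos i))).mp keys
    rw [Rat.cast_div, norm_div, h1, mul_comm, mul_div_assoc,
      div_self (norm_ne_zero_iff.mpr hqsc), mul_one]
  have hfs_ne : pv (σ⁻¹ i) / qv (σ⁻¹ i) ≠ 0 := div_ne_zero (hp1 _) hqs
  have hpos : 0 < padicValRat p (pv (σ⁻¹ i) / qv (σ⁻¹ i)) := by
    rw [val_pos_iff p _ hfs_ne, hfracs]; exact hxlt i
  refine ⟨fun k => ⟨hp1 k, hp2 k⟩, ⟨hqs, hqs', hpos⟩, ?_, ?_⟩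
  · -- condition (iii)
    intro k hk hqk hqk'
    have hyk : ‖(pv k : ℚ_[p]) * x (σ k) / x i - (qv k : ℚ_[p])‖ ≤ (p:ℝ)⁻¹ := by
      have := hyp k
      simp only [LFT, if_neg hk] at this
      simpa [pZ] using this
    have hqk1 : (1:ℝ) ≤ ‖((qv k : ℚ) : ℚ_[p])‖ := one_le_norm p _ hqk hqk'
    have hyklt : ‖(pv k : ℚ_[p]) * x (σ k) / x i - (qv k : ℚ_[p])‖ <
        ‖((qv k : ℚ) : ℚ_[p])‖ := lt_of_le_of_lt hyk (lt_of_lt_of_le hinv hqk1)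
    have keyk : ‖(pv k : ℚ_[p]) * x (σ k) / x i‖ = ‖((qv k : ℚ) : ℚ_[p])‖ := by
      have heq : (pv k : ℚ_[p]) * x (σ k) / x i =
          ((pv k : ℚ_[p]) * x (σ k) / x i - (qv k : ℚ_[p])) + (qv k : ℚ_[p]) := by ring
      rw [heq, Padic.add_eq_max_of_ne (ne_of_lt hyklt), max_eq_right (le_of_lt hyklt)]
    have hqkc : ((qv k : ℚ_[p])) ≠ 0 := Rat.cast_ne_zero.mpr hqk
    have hfrack : ‖((pv k / qv k : ℚ) : ℚ_[p])‖ = ‖x i‖ / ‖x (σ k)‖ := by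
      rw [norm_div, norm_mul] at keyk
      rw [Rat.cast_div, norm_div]
      rw [div_eq_div_iff (norm_ne_zero_iff.mpr hqkc) (ne_of_gt (hxpos (σ k)))]
      rw [div_eq_iff (ne_of_gt (hxpos i))] at keyk
      rw [keyk]; ring
    rw [val_lt_iff p _ _ (div_ne_zero (hp1 k) hqk) hfs_ne, hfracs, hfrack]
    rw [lt_div_iff₀ (hxpos (σ k))]
    exact mul_lt_of_lt_one_right (hxpos i) (hxlt (σ k))
  · -- condition (iv)
    intro k hk hcase
    rw [hp3 k hcase]
    exact hpos

end PadicCF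
end
end

section
/- (Hyperbolicity Lemma) Let F be a hyperbolic m-dimensional LFT with parameter (i, σ, p⃗, q⃗). Then for all x, y ∈ (pℤ_p)^m, |F^{-1}(x) − F^{-1}(y)|_p ≤ p^{-1} |x − y|_p, where for z = (z_1,…,z_m) ∈ ℚ_p^m we set |z|_p = max_{1≤j≤m} |z_j|_p. -/
open MeasureTheory Filter Topology
open scoped Classical

noncomputable section

namespace PadicCF

open MeasureTheory Filter Topology
open scoped ENNReal NNReal

variable (p : ℕ) [Fact p.Prime]

lemma norm_ratCast_eq_zpow {q : ℚ} (hq : q ≠ 0) :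
    ‖(q : ℚ_[p])‖ = (p : ℝ) ^ (-padicValRat p q) := by
  rw [Padic.eq_padicNorm, padicNorm.eq_zpow_of_nonzero hq]
  push_cast
  ring

theorem hyperbolicity_lemma (m : ℕ) (hm : 1 ≤ m) (i : Fin m) (σ : Equiv.Perm (Fin m))
    (pv qv : Fin m → ℚ) (hF : Hyperbolic p i σ pv qv)
    (x y : Fin m → ℚ_[p]) (hx : ∀ j, x j ∈ pZ p) (hy : ∀ j, y j ∈ pZ p) :
    supNorm p (LFTinv p i σ pv qv x - LFTinv p i σ pv qv y) ≤
      (p : NNReal)⁻¹ * supNorm p (x - y) := by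
  classical
  obtain ⟨hpv, ⟨hqs0, hqsle, hqspos⟩, h3, h4⟩ := hF
  have hp1 : (1 : ℝ) < (p : ℝ) := by exact_mod_cast (Fact.out : p.Prime).one_lt
  have hp0 : (0 : ℝ) < (p : ℝ) := lt_trans one_pos hp1
  have hzpow : ∀ a b : ℤ, a ≤ b → ((p : ℝ)) ^ a ≤ (p : ℝ) ^ b := fun a b h =>
    zpow_le_zpow_right₀ hp1.le h
  have hzadd : ∀ a b : ℤ, (p : ℝ) ^ a * (p : ℝ) ^ b = (p : ℝ) ^ (a + b) := fun a b =>
    (zpow_add₀ hp0.ne' a b).symm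
  have hzsub : ∀ a b : ℤ, (p : ℝ) ^ a / (p : ℝ) ^ b = (p : ℝ) ^ (a - b) := fun a b =>
    (zpow_sub₀ hp0.ne' a b).symm
  have hpinv : (p : ℝ)⁻¹ = (p : ℝ) ^ (-1 : ℤ) := (zpow_neg_one _).symm
  have hpinv1 : (p : ℝ)⁻¹ < 1 := by
    rw [hpinv]
    calc (p : ℝ) ^ (-1 : ℤ) < (p : ℝ) ^ (0 : ℤ) :=
      zpow_lt_zpow_right₀ hp1 (by norm_num)
    _ = 1 := by simp
  set s : Fin m := σ⁻¹ i with hs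
  set S : ℝ := (supNorm p (x - y) : ℝ) with hSdef
  have hS0 : 0 ≤ S := (supNorm p (x - y)).coe_nonneg
  have hSle : ∀ j, ‖x j - y j‖ ≤ S := by
    intro j
    have h := Finset.le_sup (f := fun j => ‖(x - y) j‖₊) (Finset.mem_univ j)
    have := NNReal.coe_le_coe.mpr h
    simpa [supNorm, Pi.sub_apply, hSdef] using this
  set A := padicValRat p (pv s) with hA
  set B := padicValRat p (qv s) with hB
  have hps0 : pv s ≠ 0 := (hpv s).1
  have hA0 : 0 ≤ A := (hpv s).2
  have hB0 : B ≤ 0 := hqsle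
  have hAB : 1 ≤ A - B := by
    have h := hqspos
    rw [padicValRat.div hps0 hqs0] at h
    omega
  have hnqs : ‖((qv s : ℚ) : ℚ_[p])‖ = (p : ℝ) ^ (-B) := norm_ratCast_eq_zpow p hqs0
  -- general fact: adding a small element to a rational of nonpositive valuation keeps the norm
  have haddq : ∀ q : ℚ, q ≠ 0 → padicValRat p q ≤ 0 → ∀ a : ℚ_[p],
      ‖a‖ ≤ (p : ℝ)⁻¹ → ‖a + (q : ℚ_[p])‖ = ‖(q : ℚ_[p])‖ := by
    intro q hq hval a ha
    have h1q : (1 : ℝ) ≤ ‖(q : ℚ_[p])‖ := by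
      rw [norm_ratCast_eq_zpow p hq]
      calc (1 : ℝ) = (p : ℝ) ^ (0 : ℤ) := by simp
      _ ≤ _ := hzpow 0 _ (by omega)
    have hlt : ‖a‖ < ‖(q : ℚ_[p])‖ := lt_of_le_of_lt ha (lt_of_lt_of_le hpinv1 h1q)
    rw [Padic.add_eq_max_of_ne (ne_of_lt hlt), max_eq_right hlt.le]
  have hxq : ‖x s + ((qv s : ℚ) : ℚ_[p])‖ = ‖((qv s : ℚ) : ℚ_[p])‖ :=
    haddq _ hqs0 hqsle _ (hx s)
  have hyq : ‖y s + ((qv s : ℚ) : ℚ_[p])‖ = ‖((qv s : ℚ) : ℚ_[p])‖ :=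
    haddq _ hqs0 hqsle _ (hy s)
  have h1qs : (1 : ℝ) ≤ ‖((qv s : ℚ) : ℚ_[p])‖ := by
    rw [hnqs]
    calc (1 : ℝ) = (p : ℝ) ^ (0 : ℤ) := by simp
    _ ≤ _ := hzpow 0 _ (by omega)
  have hxqne : x s + ((qv s : ℚ) : ℚ_[p]) ≠ 0 := by
    intro h
    rw [h, norm_zero] at hxq
    linarith [h1qs, hxq.symm ▸ h1qs]
  have hyqne : y s + ((qv s : ℚ) : ℚ_[p]) ≠ 0 := by
    intro h
    rw [h, norm_zero] at hyq
    linarith [h1qs, hyq.symm ▸ h1qs]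
  have key : ∀ k, ‖LFTinv p i σ pv qv x k - LFTinv p i σ pv qv y k‖ ≤ (p : ℝ)⁻¹ * S := by
    intro k
    by_cases hk : k = i
    · subst hk
      simp only [LFTinv, eq_self_iff_true, if_true, ← hs]
      have heq : ((pv s : ℚ) : ℚ_[p]) / (x s + (qv s : ℚ)) -
          ((pv s : ℚ) : ℚ_[p]) / (y s + (qv s : ℚ)) =
          ((pv s : ℚ) : ℚ_[p]) * (-(x s - y s)) /
            ((x s + (qv s : ℚ)) * (y s + (qv s : ℚ))) := by
        field_simp
        ring
      rw [heq, norm_div, norm_mul, norm_neg, norm_mul, hxq, hyq, hnqs,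
        norm_ratCast_eq_zpow p hps0]
      have harr : (p : ℝ) ^ (-A) * ‖x s - y s‖ / ((p : ℝ) ^ (-B) * (p : ℝ) ^ (-B)) =
          ((p : ℝ) ^ (-A) / ((p : ℝ) ^ (-B) * (p : ℝ) ^ (-B))) * ‖x s - y s‖ := by ring
      rw [harr, hzadd, hzsub]
      rw [hpinv]
      exact mul_le_mul (hzpow _ _ (by omega)) (hSle s) (norm_nonneg _)
        (zpow_nonneg hp0.le _)
    · simp only [LFTinv, if_neg hk, ← hs]
      set t : Fin m := σ⁻¹ k with ht
      have hts : t ≠ s := fun h => hk (σ⁻¹.injective (by rw [← ht, ← hs, h]))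
      have hpt0 : pv t ≠ 0 := (hpv t).1
      set C := padicValRat p (pv t) with hC
      have hC0 : 0 ≤ C := (hpv t).2
      have hptC : ((pv t : ℚ) : ℚ_[p]) ≠ 0 := by exact_mod_cast hpt0
      have heq : ((pv s : ℚ) : ℚ_[p]) * (x t + (qv t : ℚ)) /
            (((pv t : ℚ) : ℚ_[p]) * (x s + (qv s : ℚ))) -
          ((pv s : ℚ) : ℚ_[p]) * (y t + (qv t : ℚ)) /
            (((pv t : ℚ) : ℚ_[p]) * (y s + (qv s : ℚ))) =
          ((pv s : ℚ) : ℚ_[p]) * (x t - y t) / (((pv t : ℚ) : ℚ_[p]) * (y s + (qv s : ℚ))) +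
          ((pv s : ℚ) : ℚ_[p]) * (x t + (qv t : ℚ)) * (-(x s - y s)) /
            (((pv t : ℚ) : ℚ_[p]) * (x s + (qv s : ℚ)) * (y s + (qv s : ℚ))) := by
        field_simp
        ring
      rw [heq]
      refine le_trans (Padic.nonarchimedean _ _) (max_le ?_ ?_)
      · -- first term
        have hACB : 1 ≤ A - C - B := by
          by_cases hqt : qv t = 0
          · have h := h4 t hts (Or.inl hqt)
            rw [padicValRat.div hps0 hqs0] at h
            omega
          · by_cases hval : padicValRat p (qv t) ≤ 0
            · have h := h3 t hts hqt hval
              rw [padicValRat.div hps0 hqs0, padicValRat.div hpt0 hqt] at h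
              omega
            · have h := h4 t hts (Or.inr (by omega))
              rw [padicValRat.div hps0 hqs0] at h
              omega
        rw [norm_div, norm_mul, norm_mul, hyq, hnqs, norm_ratCast_eq_zpow p hps0,
          norm_ratCast_eq_zpow p hpt0]
        have harr : (p : ℝ) ^ (-A) * ‖x t - y t‖ / ((p : ℝ) ^ (-C) * (p : ℝ) ^ (-B)) =
            ((p : ℝ) ^ (-A) / ((p : ℝ) ^ (-C) * (p : ℝ) ^ (-B))) * ‖x t - y t‖ := by ring
        rw [harr, hzadd, hzsub, hpinv]
        exact mul_le_mul (hzpow _ _ (by omega)) (hSle t) (norm_nonneg _)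
          (zpow_nonneg hp0.le _)
      · -- second term
        rw [norm_div, norm_mul, norm_neg, norm_mul, norm_mul, norm_mul, hxq, hyq, hnqs,
          norm_ratCast_eq_zpow p hps0, norm_ratCast_eq_zpow p hpt0]
        have harr : (p : ℝ) ^ (-A) * ‖x t + ((qv t : ℚ) : ℚ_[p])‖ * ‖x s - y s‖ /
              ((p : ℝ) ^ (-C) * (p : ℝ) ^ (-B) * (p : ℝ) ^ (-B)) =
            ((p : ℝ) ^ (-A) / ((p : ℝ) ^ (-C) * (p : ℝ) ^ (-B) * (p : ℝ) ^ (-B)) *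
              ‖x t + ((qv t : ℚ) : ℚ_[p])‖) * ‖x s - y s‖ := by ring
        rw [harr, hzadd, hzadd, hzsub, hpinv]
        refine mul_le_mul ?_ (hSle s) (norm_nonneg _) (zpow_nonneg hp0.le _)
        -- coefficient bound
        by_cases hqt : qv t ≠ 0 ∧ padicValRat p (qv t) ≤ 0
        · obtain ⟨hqt0, hqtval⟩ := hqt
          set D := padicValRat p (qv t) with hD
          have hCD : C - D + 1 ≤ A - B := by
            have h := h3 t hts hqt0 hqtval
            rw [padicValRat.div hps0 hqs0, padicValRat.div hpt0 hqt0] at h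
            omega
          rw [haddq _ hqt0 hqtval _ (hx t), norm_ratCast_eq_zpow p hqt0, hzadd]
          exact hzpow _ _ (by omega)
        · have hqtalt : qv t = 0 ∨ 0 < padicValRat p (qv t) := by
            by_cases h0 : qv t = 0
            · exact Or.inl h0
            · exact Or.inr (by push_neg at hqt; have := hqt h0; omega)
          have hCB : C < A - B := by
            have h := h4 t hts hqtalt
            rw [padicValRat.div hps0 hqs0] at h
            omega
          have hxt1 : ‖x t + ((qv t : ℚ) : ℚ_[p])‖ ≤ 1 := by
            have hqtn : ‖((qv t : ℚ) : ℚ_[p])‖ ≤ (p : ℝ)⁻¹ := by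
              rcases hqtalt with h0 | hpos
              · simp [h0, inv_nonneg.mpr hp0.le]
              · have hqt0 : qv t ≠ 0 := fun h => by simp [h, padicValRat.zero] at hpos
                rw [norm_ratCast_eq_zpow p hqt0, hpinv]
                exact hzpow _ _ (by omega)
            calc ‖x t + ((qv t : ℚ) : ℚ_[p])‖ ≤ max ‖x t‖ ‖((qv t : ℚ) : ℚ_[p])‖ :=
              Padic.nonarchimedean _ _
            _ ≤ (p : ℝ)⁻¹ := max_le (hx t) hqtn
            _ ≤ 1 := hpinv1.le
          calc (p : ℝ) ^ (-A - (-C + -B + -B)) * ‖x t + ((qv t : ℚ) : ℚ_[p])‖ ≤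
              (p : ℝ) ^ (-A - (-C + -B + -B)) * 1 :=
                mul_le_mul_of_nonneg_left hxt1 (zpow_nonneg hp0.le _)
          _ = (p : ℝ) ^ (-A - (-C + -B + -B)) := mul_one _
          _ ≤ (p : ℝ) ^ (-1 : ℤ) := hzpow _ _ (by omega)
  -- conclude in NNReal
  apply Finset.sup_le
  intro j _
  rw [← NNReal.coe_le_coe]
  push_cast
  calc (‖(LFTinv p i σ pv qv x - LFTinv p i σ pv qv y) j‖₊ : ℝ) =
      ‖LFTinv p i σ pv qv x j - LFTinv p i σ pv qv y j‖ := by simp [Pi.sub_apply]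
  _ ≤ (p : ℝ)⁻¹ * S := key j
  _ = ((p : NNReal)⁻¹ * supNorm p (x - y) : NNReal) := by push_cast [hSdef]; ring

end PadicCF
end
end

section
/- Let {F_λ}_{λ∈Λ} be an m-dimensional continued fraction system with associated transformation T on D_m'. For α ∈ D_m' define ψ_j(α) = λ if T^j(α) ∈ F_λ^{-1}(D_m'), and define the j-th convergent π(α; j) = (F_{ψ_0}^{-1} ∘ ⋯ ∘ F_{ψ_j}^{-1})(0̄), where 0̄ = (0,…,0) ∈ (pℤ_p)^m. Then for every α ∈ D_m', |α − π(α; j)|_p ≤ p^{-j} for all j ≥ 0, and in particular lim_{j→∞} π(α; j) = α. -/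
open MeasureTheory Filter Topology
open scoped Classical

noncomputable section

namespace PadicCF

open MeasureTheory Filter Topology
open scoped ENNReal NNReal

variable (p : ℕ) [Fact p.Prime]

section AuxLemmas

variable {p : ℕ} [hp : Fact p.Prime]

private lemma one_lt_p' : (1 : ℝ) < (p : ℝ) := by exact_mod_cast hp.out.one_lt

private lemma p_ne_zero' : (p : ℝ) ≠ 0 := by exact_mod_cast hp.out.pos.ne'

private lemma pinv_lt_one' : (p : ℝ)⁻¹ < 1 := by
  rw [inv_lt_one_iff₀]; right; exact one_lt_p'

lemma norm_ratCast_eq {r : ℚ} (hr : r ≠ 0) :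
    ‖(r : ℚ_[p])‖ = (p : ℝ) ^ (-padicValRat p r) := by
  rw [Padic.eq_padicNorm, padicNorm.eq_zpow_of_nonzero hr]
  push_cast
  ring

lemma le_aux {a b : ℚ} (ha : a ≠ 0) (hb : b ≠ 0) (n : ℤ)
    (h : padicValRat p b + n ≤ padicValRat p a) :
    ‖(a : ℚ_[p])‖ ≤ (p : ℝ) ^ (-n) * ‖(b : ℚ_[p])‖ := by
  rw [norm_ratCast_eq ha, norm_ratCast_eq hb, ← zpow_add₀ p_ne_zero']
  exact zpow_le_zpow_right₀ (le_of_lt one_lt_p') (by omega)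

variable {m : ℕ} {i : Fin m} {σ : Equiv.Perm (Fin m)} {pv qv : Fin m → ℚ}

lemma hyp_P_ne (h : Hyperbolic p i σ pv qv) (k : Fin m) : (pv k : ℚ_[p]) ≠ 0 := by
  exact_mod_cast Rat.cast_ne_zero.mpr (h.1 k).1

lemma hyp_P_le_one (h : Hyperbolic p i σ pv qv) (k : Fin m) : ‖(pv k : ℚ_[p])‖ ≤ 1 := by
  have := le_aux (p := p) (h.1 k).1 (one_ne_zero) 0 (by simpa using (h.1 k).2)
  simpa using this

lemma hyp_Q_ne (h : Hyperbolic p i σ pv qv) : (qv (σ⁻¹ i) : ℚ_[p]) ≠ 0 :=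
  Rat.cast_ne_zero.mpr h.2.1.1

lemma hyp_one_le_Q (h : Hyperbolic p i σ pv qv) : 1 ≤ ‖(qv (σ⁻¹ i) : ℚ_[p])‖ := by
  have := le_aux (p := p) (one_ne_zero) h.2.1.1 0 (by simpa using h.2.1.2.1)
  simpa using this

lemma hyp_Ps_le (h : Hyperbolic p i σ pv qv) :
    ‖(pv (σ⁻¹ i) : ℚ_[p])‖ ≤ (p : ℝ)⁻¹ * ‖(qv (σ⁻¹ i) : ℚ_[p])‖ := by
  have hv : 0 < padicValRat p (pv (σ⁻¹ i)) - padicValRat p (qv (σ⁻¹ i)) := by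
    rw [← padicValRat.div (h.1 _).1 h.2.1.1]; exact h.2.1.2.2
  have := le_aux (p := p) (h.1 (σ⁻¹ i)).1 h.2.1.1 1 (by omega)
  simpa [zpow_neg_one] using this

lemma hyp_key (h : Hyperbolic p i σ pv qv) {t : Fin m} (ht : t ≠ σ⁻¹ i) :
    ‖(pv (σ⁻¹ i) : ℚ_[p])‖ * max 1 ‖(qv t : ℚ_[p])‖ ≤
      (p : ℝ)⁻¹ * (‖(pv t : ℚ_[p])‖ * ‖(qv (σ⁻¹ i) : ℚ_[p])‖) := by
  have hps := (h.1 (σ⁻¹ i)).1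
  have hpt := (h.1 t).1
  have hqs := h.2.1.1
  by_cases hqt : qv t ≠ 0 ∧ padicValRat p (qv t) ≤ 0
  · -- case (iii)
    obtain ⟨hqt0, hqtv⟩ := hqt
    have hQt : 1 ≤ ‖(qv t : ℚ_[p])‖ := by
      have := le_aux (p := p) (one_ne_zero) hqt0 0 (by simpa using hqtv)
      simpa using this
    rw [max_eq_right hQt]
    have hv : padicValRat p (pv t / qv t) < padicValRat p (pv (σ⁻¹ i) / qv (σ⁻¹ i)) :=
      h.2.2.1 t ht hqt0 hqtv
    rw [padicValRat.div hpt hqt0, padicValRat.div hps hqs] at hv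
    have := le_aux (p := p) (a := pv (σ⁻¹ i) * qv t) (b := pv t * qv (σ⁻¹ i))
      (mul_ne_zero hps hqt0) (mul_ne_zero hpt hqs) 1
      (by rw [padicValRat.mul hps hqt0, padicValRat.mul hpt hqs]; omega)
    rw [Rat.cast_mul, Rat.cast_mul, norm_mul, norm_mul] at this
    simpa [zpow_neg_one] using this
  · -- case (iv)
    have hcase : qv t = 0 ∨ 0 < padicValRat p (qv t) := by
      by_cases h0 : qv t = 0
      · exact Or.inl h0
      · exact Or.inr (by push_neg at hqt; exact hqt h0)
    have hv : padicValRat p (pv t) < padicValRat p (pv (σ⁻¹ i) / qv (σ⁻¹ i)) :=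
      h.2.2.2 t ht hcase
    rw [padicValRat.div hps hqs] at hv
    have hmax : max 1 ‖(qv t : ℚ_[p])‖ = 1 := by
      rcases hcase with h0 | h0
      · simp [h0]
      · have hqt0 : qv t ≠ 0 := by
          intro hc; rw [hc] at h0; simp [padicValRat] at h0
        have : ‖(qv t : ℚ_[p])‖ ≤ (p : ℝ) ^ (-(1:ℤ)) * ‖((1:ℚ) : ℚ_[p])‖ := by
          refine le_aux (p := p) hqt0 one_ne_zero 1 ?_
          simp only [padicValRat.one]; omega
        rw [zpow_neg_one] at this
        rw [max_eq_left]
        calc ‖(qv t : ℚ_[p])‖ ≤ (p:ℝ)⁻¹ * 1 := by simpa using this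
        _ ≤ 1 := by rw [mul_one]; exact le_of_lt pinv_lt_one'
    rw [hmax, mul_one]
    have := le_aux (p := p) (a := pv (σ⁻¹ i)) (b := pv t * qv (σ⁻¹ i)) hps
      (mul_ne_zero hpt hqs) 1 (by rw [padicValRat.mul hpt hqs]; omega)
    rw [Rat.cast_mul, norm_mul] at this
    simpa [zpow_neg_one] using this

end AuxLemmas

section InvLemmas

variable {p : ℕ} [hp : Fact p.Prime] {m : ℕ} {i : Fin m} {σ : Equiv.Perm (Fin m)}
  {pv qv : Fin m → ℚ}

lemma normA (h : Hyperbolic p i σ pv qv) {a : ℚ_[p]} (ha : ‖a‖ ≤ (p : ℝ)⁻¹) :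
    ‖a + (qv (σ⁻¹ i) : ℚ_[p])‖ = ‖(qv (σ⁻¹ i) : ℚ_[p])‖ := by
  have h1 : ‖a‖ < ‖(qv (σ⁻¹ i) : ℚ_[p])‖ :=
    lt_of_le_of_lt ha (lt_of_lt_of_le pinv_lt_one' (hyp_one_le_Q h))
  rw [Padic.add_eq_max_of_ne (ne_of_lt h1), max_eq_right (le_of_lt h1)]

lemma A_ne (h : Hyperbolic p i σ pv qv) {a : ℚ_[p]} (ha : ‖a‖ ≤ (p : ℝ)⁻¹) :
    a + (qv (σ⁻¹ i) : ℚ_[p]) ≠ 0 := by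
  have := normA h ha
  intro hc
  rw [hc, norm_zero] at this
  exact absurd this.symm (ne_of_gt (lt_of_lt_of_le one_pos (hyp_one_le_Q h)))

lemma LFTinv_apply_i (y : Fin m → ℚ_[p]) :
    LFTinv p i σ pv qv y i = (pv (σ⁻¹ i) : ℚ_[p]) / (y (σ⁻¹ i) + (qv (σ⁻¹ i) : ℚ_[p])) := by
  simp [LFTinv]

lemma LFTinv_apply_ne {k : Fin m} (hk : k ≠ i) (y : Fin m → ℚ_[p]) :
    LFTinv p i σ pv qv y k = (pv (σ⁻¹ i) : ℚ_[p]) * (y (σ⁻¹ k) + (qv (σ⁻¹ k) : ℚ_[p])) /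
      ((pv (σ⁻¹ k) : ℚ_[p]) * (y (σ⁻¹ i) + (qv (σ⁻¹ i) : ℚ_[p]))) := by
  simp [LFTinv, hk]

lemma LFTinv_mem (h : Hyperbolic p i σ pv qv) {y : Fin m → ℚ_[p]}
    (hy : ∀ k, ‖y k‖ ≤ (p : ℝ)⁻¹) (k : Fin m) :
    ‖LFTinv p i σ pv qv y k‖ ≤ (p : ℝ)⁻¹ := by
  have hA : ‖y (σ⁻¹ i) + (qv (σ⁻¹ i) : ℚ_[p])‖ = ‖(qv (σ⁻¹ i) : ℚ_[p])‖ := normA h (hy _)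
  have hQpos : (0 : ℝ) < ‖(qv (σ⁻¹ i) : ℚ_[p])‖ := lt_of_lt_of_le one_pos (hyp_one_le_Q h)
  by_cases hk : k = i
  · subst hk
    rw [LFTinv_apply_i, norm_div, hA, div_le_iff₀ hQpos]
    exact hyp_Ps_le h
  · have ht : σ⁻¹ k ≠ σ⁻¹ i := fun hc => hk (by simpa using congrArg σ hc)
    have hPt : (0 : ℝ) < ‖(pv (σ⁻¹ k) : ℚ_[p])‖ := norm_pos_iff.mpr (hyp_P_ne h _)
    rw [LFTinv_apply_ne hk, norm_div, norm_mul, norm_mul, hA,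
      div_le_iff₀ (by positivity)]
    have hf : ‖y (σ⁻¹ k) + (qv (σ⁻¹ k) : ℚ_[p])‖ ≤ max 1 ‖(qv (σ⁻¹ k) : ℚ_[p])‖ := by
      refine le_trans (Padic.nonarchimedean _ _) (max_le_max ?_ le_rfl)
      exact le_trans (hy _) (le_of_lt pinv_lt_one')
    calc ‖(pv (σ⁻¹ i) : ℚ_[p])‖ * ‖y (σ⁻¹ k) + (qv (σ⁻¹ k) : ℚ_[p])‖
        ≤ ‖(pv (σ⁻¹ i) : ℚ_[p])‖ * max 1 ‖(qv (σ⁻¹ k) : ℚ_[p])‖ :=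
          mul_le_mul_of_nonneg_left hf (norm_nonneg _)
      _ ≤ (p : ℝ)⁻¹ * (‖(pv (σ⁻¹ k) : ℚ_[p])‖ * ‖(qv (σ⁻¹ i) : ℚ_[p])‖) := hyp_key h ht

lemma LFTinv_contract (h : Hyperbolic p i σ pv qv) {y y' : Fin m → ℚ_[p]}
    (hy : ∀ k, ‖y k‖ ≤ (p : ℝ)⁻¹) (hy' : ∀ k, ‖y' k‖ ≤ (p : ℝ)⁻¹) {c : ℝ}
    (hd : ∀ k, ‖y k - y' k‖ ≤ c) (k : Fin m) :
    ‖LFTinv p i σ pv qv y k - LFTinv p i σ pv qv y' k‖ ≤ (p : ℝ)⁻¹ * c := by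
  have hc0 : 0 ≤ c := le_trans (norm_nonneg _) (hd k)
  have hA : ‖y (σ⁻¹ i) + (qv (σ⁻¹ i) : ℚ_[p])‖ = ‖(qv (σ⁻¹ i) : ℚ_[p])‖ := normA h (hy _)
  have hA' : ‖y' (σ⁻¹ i) + (qv (σ⁻¹ i) : ℚ_[p])‖ = ‖(qv (σ⁻¹ i) : ℚ_[p])‖ := normA h (hy' _)
  have hA0 : y (σ⁻¹ i) + (qv (σ⁻¹ i) : ℚ_[p]) ≠ 0 := A_ne h (hy _)
  have hA0' : y' (σ⁻¹ i) + (qv (σ⁻¹ i) : ℚ_[p]) ≠ 0 := A_ne h (hy' _)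
  have hQ1 : 1 ≤ ‖(qv (σ⁻¹ i) : ℚ_[p])‖ := hyp_one_le_Q h
  have hQpos : (0 : ℝ) < ‖(qv (σ⁻¹ i) : ℚ_[p])‖ := lt_of_lt_of_le one_pos hQ1
  have hPsle := hyp_Ps_le h
  have hpinv : (0:ℝ) ≤ (p:ℝ)⁻¹ := by positivity
  by_cases hk : k = i
  · rw [hk, LFTinv_apply_i, LFTinv_apply_i]
    have hid : (pv (σ⁻¹ i) : ℚ_[p]) / (y (σ⁻¹ i) + (qv (σ⁻¹ i) : ℚ_[p])) -
        (pv (σ⁻¹ i) : ℚ_[p]) / (y' (σ⁻¹ i) + (qv (σ⁻¹ i) : ℚ_[p])) =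
        (pv (σ⁻¹ i) : ℚ_[p]) * (y' (σ⁻¹ i) - y (σ⁻¹ i)) /
          ((y (σ⁻¹ i) + (qv (σ⁻¹ i) : ℚ_[p])) * (y' (σ⁻¹ i) + (qv (σ⁻¹ i) : ℚ_[p]))) := by
      rw [div_sub_div _ _ hA0 hA0']
      congr 1
      ring
    rw [hid, norm_div, norm_mul, norm_mul, hA, hA', div_le_iff₀ (by positivity)]
    have hds : ‖y' (σ⁻¹ i) - y (σ⁻¹ i)‖ ≤ c := by rw [norm_sub_rev]; exact hd _
    calc ‖(pv (σ⁻¹ i) : ℚ_[p])‖ * ‖y' (σ⁻¹ i) - y (σ⁻¹ i)‖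
        ≤ ((p:ℝ)⁻¹ * ‖(qv (σ⁻¹ i) : ℚ_[p])‖) * c :=
          mul_le_mul hPsle hds (norm_nonneg _) (by positivity)
      _ ≤ (p:ℝ)⁻¹ * c * (‖(qv (σ⁻¹ i) : ℚ_[p])‖ * ‖(qv (σ⁻¹ i) : ℚ_[p])‖) := by
          nlinarith [mul_nonneg (mul_nonneg (mul_nonneg hpinv hc0) hQpos.le)
            (sub_nonneg.mpr hQ1)]
  · have ht : σ⁻¹ k ≠ σ⁻¹ i := fun hc => hk (by simpa using congrArg σ hc)
    have hpt0 : (pv (σ⁻¹ k) : ℚ_[p]) ≠ 0 := hyp_P_ne h _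
    have hPt : (0 : ℝ) < ‖(pv (σ⁻¹ k) : ℚ_[p])‖ := norm_pos_iff.mpr hpt0
    rw [LFTinv_apply_ne hk, LFTinv_apply_ne hk]
    have hid : (pv (σ⁻¹ i) : ℚ_[p]) * (y (σ⁻¹ k) + (qv (σ⁻¹ k) : ℚ_[p])) /
        ((pv (σ⁻¹ k) : ℚ_[p]) * (y (σ⁻¹ i) + (qv (σ⁻¹ i) : ℚ_[p]))) -
        (pv (σ⁻¹ i) : ℚ_[p]) * (y' (σ⁻¹ k) + (qv (σ⁻¹ k) : ℚ_[p])) /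
        ((pv (σ⁻¹ k) : ℚ_[p]) * (y' (σ⁻¹ i) + (qv (σ⁻¹ i) : ℚ_[p]))) =
        (pv (σ⁻¹ i) : ℚ_[p]) *
          ((y (σ⁻¹ k) - y' (σ⁻¹ k)) * (y' (σ⁻¹ i) + (qv (σ⁻¹ i) : ℚ_[p])) +
            (y' (σ⁻¹ k) + (qv (σ⁻¹ k) : ℚ_[p])) * (y' (σ⁻¹ i) - y (σ⁻¹ i))) /
          ((pv (σ⁻¹ k) : ℚ_[p]) *
            ((y (σ⁻¹ i) + (qv (σ⁻¹ i) : ℚ_[p])) * (y' (σ⁻¹ i) + (qv (σ⁻¹ i) : ℚ_[p])))) := by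
      rw [div_sub_div _ _ (mul_ne_zero hpt0 hA0) (mul_ne_zero hpt0 hA0'),
        div_eq_div_iff (mul_ne_zero (mul_ne_zero hpt0 hA0) (mul_ne_zero hpt0 hA0'))
          (mul_ne_zero hpt0 (mul_ne_zero hA0 hA0'))]
      ring
    rw [hid, norm_div, norm_mul, norm_mul, norm_mul, hA, hA', div_le_iff₀ (by positivity)]
    have hf' : ‖y' (σ⁻¹ k) + (qv (σ⁻¹ k) : ℚ_[p])‖ ≤ max 1 ‖(qv (σ⁻¹ k) : ℚ_[p])‖ := by
      refine le_trans (Padic.nonarchimedean _ _) (max_le_max ?_ le_rfl)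
      exact le_trans (hy' _) (le_of_lt pinv_lt_one')
    have hkey := hyp_key h ht
    have hmax1 : (1:ℝ) ≤ max 1 ‖(qv (σ⁻¹ k) : ℚ_[p])‖ := le_max_left _ _
    have hN : ‖(y (σ⁻¹ k) - y' (σ⁻¹ k)) * (y' (σ⁻¹ i) + (qv (σ⁻¹ i) : ℚ_[p])) +
        (y' (σ⁻¹ k) + (qv (σ⁻¹ k) : ℚ_[p])) * (y' (σ⁻¹ i) - y (σ⁻¹ i))‖ ≤
        max (c * ‖(qv (σ⁻¹ i) : ℚ_[p])‖) (max 1 ‖(qv (σ⁻¹ k) : ℚ_[p])‖ * c) := by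
      refine le_trans (Padic.nonarchimedean _ _) (max_le_max ?_ ?_)
      · rw [norm_mul, hA']
        exact mul_le_mul_of_nonneg_right (hd _) (norm_nonneg _)
      · rw [norm_mul]
        refine mul_le_mul hf' ?_ (norm_nonneg _) (le_trans zero_le_one hmax1)
        rw [norm_sub_rev]; exact hd _
    refine le_trans (mul_le_mul_of_nonneg_left hN (norm_nonneg _)) ?_
    rw [mul_max_of_nonneg _ _ (norm_nonneg ((pv (σ⁻¹ i) : ℚ_[p])))]
    have hPs' : ‖(pv (σ⁻¹ i) : ℚ_[p])‖ ≤ (p:ℝ)⁻¹ * (‖(pv (σ⁻¹ k) : ℚ_[p])‖ * ‖(qv (σ⁻¹ i) : ℚ_[p])‖) :=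
      le_trans (le_mul_of_one_le_right (norm_nonneg _) hmax1) hkey
    refine max_le ?_ ?_
    · calc ‖(pv (σ⁻¹ i) : ℚ_[p])‖ * (c * ‖(qv (σ⁻¹ i) : ℚ_[p])‖)
          ≤ ((p:ℝ)⁻¹ * (‖(pv (σ⁻¹ k) : ℚ_[p])‖ * ‖(qv (σ⁻¹ i) : ℚ_[p])‖)) *
              (c * ‖(qv (σ⁻¹ i) : ℚ_[p])‖) :=
            mul_le_mul_of_nonneg_right hPs' (by positivity)
        _ = (p:ℝ)⁻¹ * c * (‖(pv (σ⁻¹ k) : ℚ_[p])‖ *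
              (‖(qv (σ⁻¹ i) : ℚ_[p])‖ * ‖(qv (σ⁻¹ i) : ℚ_[p])‖)) := by ring
    · calc ‖(pv (σ⁻¹ i) : ℚ_[p])‖ * (max 1 ‖(qv (σ⁻¹ k) : ℚ_[p])‖ * c)
          = (‖(pv (σ⁻¹ i) : ℚ_[p])‖ * max 1 ‖(qv (σ⁻¹ k) : ℚ_[p])‖) * c := by ring
        _ ≤ ((p:ℝ)⁻¹ * (‖(pv (σ⁻¹ k) : ℚ_[p])‖ * ‖(qv (σ⁻¹ i) : ℚ_[p])‖)) * c :=
            mul_le_mul_of_nonneg_right hkey hc0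
        _ ≤ (p:ℝ)⁻¹ * c * (‖(pv (σ⁻¹ k) : ℚ_[p])‖ *
              (‖(qv (σ⁻¹ i) : ℚ_[p])‖ * ‖(qv (σ⁻¹ i) : ℚ_[p])‖)) := by
            nlinarith [mul_nonneg (mul_nonneg (mul_nonneg hpinv hc0)
              (mul_nonneg hPt.le hQpos.le)) (sub_nonneg.mpr hQ1)]

lemma LFT_LFTinv (h : Hyperbolic p i σ pv qv) {y : Fin m → ℚ_[p]}
    (hy : ∀ k, ‖y k‖ ≤ (p : ℝ)⁻¹) :
    LFT p i σ pv qv (LFTinv p i σ pv qv y) = y := by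
  funext k
  have hA0 : y (σ⁻¹ i) + (qv (σ⁻¹ i) : ℚ_[p]) ≠ 0 := A_ne h (hy _)
  have hps : (pv (σ⁻¹ i) : ℚ_[p]) ≠ 0 := hyp_P_ne h _
  by_cases hk : k = σ⁻¹ i
  · subst hk
    rw [LFT, if_pos rfl, LFTinv_apply_i, div_div_eq_mul_div, mul_div_cancel_left₀ _ hps,
      add_sub_cancel_right]
  · have hσk : σ k ≠ i := fun hc => hk (by rw [← hc]; simp)
    have hpk : (pv k : ℚ_[p]) ≠ 0 := hyp_P_ne h _
    rw [LFT, if_neg hk, LFTinv_apply_i, LFTinv_apply_ne hσk]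
    simp only [show σ⁻¹ (σ k) = k from σ.symm_apply_apply k]
    have h1 : (pv k : ℚ_[p]) * ((pv (σ⁻¹ i) : ℚ_[p]) * (y k + (qv k : ℚ_[p])) /
        ((pv k : ℚ_[p]) * (y (σ⁻¹ i) + (qv (σ⁻¹ i) : ℚ_[p])))) /
        ((pv (σ⁻¹ i) : ℚ_[p]) / (y (σ⁻¹ i) + (qv (σ⁻¹ i) : ℚ_[p]))) = y k + (qv k : ℚ_[p]) := by
      rw [div_eq_iff (div_ne_zero hps hA0), ← mul_div_assoc, ← mul_div_assoc,
        div_eq_div_iff (mul_ne_zero hpk hA0) hA0]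
      ring
    rw [h1, add_sub_cancel_right]

end InvLemmas

theorem convergent_tendsto (m : ℕ) (hm : 1 ≤ m) {Λ : Type} [Countable Λ]
    (iF : Λ → Fin m) (σF : Λ → Equiv.Perm (Fin m)) (pF qF : Λ → Fin m → ℚ)
    (hsys : IsCFSystem p m iF σF pF qF)
    (T : (Fin m → ℚ_[p]) → Fin m → ℚ_[p])
    (hT : ∀ l, ∀ x ∈ invImg p (iF l) (σF l) (pF l) (qF l),
      T x = LFT p (iF l) (σF l) (pF l) (qF l) x)
    (α : Fin m → ℚ_[p]) (hα : α ∈ Dm' p m) (ψ : ℕ → Λ)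
    (hψ : ∀ j, T^[j] α ∈ invImg p (iF (ψ j)) (σF (ψ j)) (pF (ψ j)) (qF (ψ j))) :
    (∀ j : ℕ,
      supNorm p (α - convergent p
          (fun t => LFTinv p (iF (ψ t)) (σF (ψ t)) (pF (ψ t)) (qF (ψ t))) j) ≤
        ((p : NNReal) ^ j)⁻¹) ∧
    Tendsto (fun j : ℕ => convergent p
        (fun t => LFTinv p (iF (ψ t)) (σF (ψ t)) (pF (ψ t)) (qF (ψ t))) j)
      atTop (𝓝 α) := by
  have hp : Fact p.Prime := inferInstance
  set G : ℕ → (Fin m → ℚ_[p]) → Fin m → ℚ_[p] :=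
    fun t => LFTinv p (iF (ψ t)) (σF (ψ t)) (pF (ψ t)) (qF (ψ t)) with hGdef
  have hhyp : ∀ t : ℕ, Hyperbolic p (iF (ψ t)) (σF (ψ t)) (pF (ψ t)) (qF (ψ t)) :=
    fun t => hsys.1 (ψ t)
  set Φ : ℕ → (Fin m → ℚ_[p]) → Fin m → ℚ_[p] :=
    fun j z => (List.range (j + 1)).foldr (fun t acc => G t acc) z with hΦdef
  have hΦsucc : ∀ (j : ℕ) (z : Fin m → ℚ_[p]), Φ (j + 1) z = Φ j (G (j + 1) z) := by
    intro j z
    simp only [hΦdef, List.range_succ, List.foldr_append, List.foldr_cons, List.foldr_nil]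
  have hconv : ∀ j, convergent p G j = Φ j 0 := fun j => rfl
  -- the step identity and the coordinate bounds
  have hstep : ∀ j : ℕ, T^[j] α = G j (T^[j + 1] α) ∧
      ∀ k, ‖(T^[j + 1] α) k‖ ≤ (p : ℝ)⁻¹ := by
    intro j
    obtain ⟨y, hyD, hyE⟩ := hψ j
    have hyc : ∀ k, ‖y k‖ ≤ (p : ℝ)⁻¹ := fun k => hyD.2 k
    have hTy : T^[j + 1] α = y := by
      rw [Function.iterate_succ_apply', hT (ψ j) _ (hψ j), ← hyE,
        LFT_LFTinv (hhyp j) hyc]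
    constructor
    · rw [hTy, ← hyE]
    · rw [hTy]; exact hyc
  -- α as the image of the tail under the composed inverse maps
  have halpha : ∀ j : ℕ, α = Φ j (T^[j + 1] α) := by
    intro j
    induction j with
    | zero =>
      have h0 := (hstep 0).1
      exact h0
    | succ j ih =>
      rw [hΦsucc, ← (hstep (j + 1)).1]
      exact ih
  -- contraction estimate for the composed maps
  have hmain : ∀ j : ℕ, ∀ z z' : Fin m → ℚ_[p], (∀ k, ‖z k‖ ≤ (p : ℝ)⁻¹) →
      (∀ k, ‖z' k‖ ≤ (p : ℝ)⁻¹) → ∀ c : ℝ, 0 ≤ c → (∀ k, ‖z k - z' k‖ ≤ c) →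
      ∀ k, ‖Φ j z k - Φ j z' k‖ ≤ ((p : ℝ)⁻¹) ^ (j + 1) * c := by
    intro j
    induction j with
    | zero =>
      intro z z' hz hz' c hc hd k
      have := LFTinv_contract (hhyp 0) hz hz' hd k
      simpa [hΦdef] using this
    | succ j ih =>
      intro z z' hz hz' c hc hd k
      rw [hΦsucc, hΦsucc]
      have hz2 : ∀ k, ‖G (j + 1) z k‖ ≤ (p : ℝ)⁻¹ := LFTinv_mem (hhyp (j + 1)) hz
      have hz2' : ∀ k, ‖G (j + 1) z' k‖ ≤ (p : ℝ)⁻¹ := LFTinv_mem (hhyp (j + 1)) hz'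
      have hd2 : ∀ k, ‖G (j + 1) z k - G (j + 1) z' k‖ ≤ (p : ℝ)⁻¹ * c :=
        LFTinv_contract (hhyp (j + 1)) hz hz' hd
      have := ih (G (j + 1) z) (G (j + 1) z') hz2 hz2' ((p : ℝ)⁻¹ * c)
        (mul_nonneg (by positivity) hc) hd2 k
      calc ‖Φ j (G (j + 1) z) k - Φ j (G (j + 1) z') k‖
          ≤ ((p : ℝ)⁻¹) ^ (j + 1) * ((p : ℝ)⁻¹ * c) := this
        _ = ((p : ℝ)⁻¹) ^ (j + 1 + 1) * c := by ring
  -- per-coordinate bound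
  have hbd : ∀ (j : ℕ) (k : Fin m), ‖α k - convergent p G j k‖ ≤ ((p : ℝ)⁻¹) ^ j := by
    intro j k
    have hz : ∀ k, ‖(T^[j + 1] α) k‖ ≤ (p : ℝ)⁻¹ := (hstep j).2
    have hz' : ∀ k : Fin m, ‖(0 : Fin m → ℚ_[p]) k‖ ≤ (p : ℝ)⁻¹ := by
      intro k; simp
    have hd : ∀ k, ‖(T^[j + 1] α) k - (0 : Fin m → ℚ_[p]) k‖ ≤ (p : ℝ)⁻¹ := by
      intro k; simpa using hz k
    have hthis := hmain j (T^[j + 1] α) 0 hz hz' ((p : ℝ)⁻¹) (by positivity) hd k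
    rw [← halpha j] at hthis
    rw [hconv j]
    have h5 : ((p : ℝ)⁻¹) * (p : ℝ)⁻¹ ≤ 1 := by
      nlinarith [pinv_lt_one' (p := p) (hp := hp), (by positivity : (0:ℝ) ≤ (p : ℝ)⁻¹)]
    calc ‖α k - Φ j 0 k‖ ≤ ((p : ℝ)⁻¹) ^ (j + 1) * (p : ℝ)⁻¹ := hthis
      _ = ((p : ℝ)⁻¹) ^ j * (((p : ℝ)⁻¹) * (p : ℝ)⁻¹) := by ring
      _ ≤ ((p : ℝ)⁻¹) ^ j * 1 := mul_le_mul_of_nonneg_left h5 (by positivity)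
      _ = ((p : ℝ)⁻¹) ^ j := mul_one _
  constructor
  · intro j
    refine Finset.sup_le fun k _ => ?_
    rw [← NNReal.coe_le_coe]
    have h1 : ((‖(α - convergent p G j) k‖₊ : NNReal) : ℝ) = ‖α k - convergent p G j k‖ := by
      rw [coe_nnnorm, Pi.sub_apply]
    rw [h1]
    have h2 : ((((p : NNReal) ^ j)⁻¹ : NNReal) : ℝ) = ((p : ℝ)⁻¹) ^ j := by
      push_cast
      rw [inv_pow]
    rw [h2]
    exact hbd j k
  · rw [tendsto_pi_nhds]
    intro k
    have hnorm : ∀ j : ℕ, ‖convergent p G j k - α k‖ ≤ ((p : ℝ)⁻¹) ^ j := by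
      intro j; rw [norm_sub_rev]; exact hbd j k
    have hlim : Tendsto (fun j : ℕ => ((p : ℝ)⁻¹) ^ j) atTop (𝓝 0) :=
      tendsto_pow_atTop_nhds_zero_of_lt_one (by positivity) pinv_lt_one'
    have := squeeze_zero_norm hnorm hlim
    have h3 : Tendsto (fun j => convergent p G j k - α k) atTop (𝓝 0) := this
    have h4 := h3.add_const (α k)
    simpa using h4

end PadicCF
end
end

section
/- For every ℓ ∈ ℤ_{≥0} ∪ {∞} and every x ∈ D_m', the m-dimensional LFT F^{(ℓ,x)} with parameter (1, σ', p⃗^{(ℓ,x)}, q⃗^{(ℓ,x)}) is hyperbolic. -/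
open MeasureTheory Filter Topology
open scoped Classical

noncomputable section

namespace PadicCF

open MeasureTheory Filter Topology
open scoped ENNReal NNReal

variable (p : ℕ) [Fact p.Prime]

private lemma sum_digits_eq_mod (b a : ℕ) : ∀ K : ℕ,
    ∑ j ∈ Finset.range K, (a / b ^ j % b) * b ^ j = a % b ^ K := by
  intro K
  induction K with
  | zero => simp [Nat.mod_one]
  | succ K ih =>
    rw [Finset.sum_range_succ, ih, pow_succ, Nat.mod_mul]
    ring

lemma exists_isIntegralPart (α : ℚ_[p]) : ∃ v : ℚ, IsIntegralPart p α v := by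
  have hp1 : 1 < p := (Fact.out : p.Prime).one_lt
  have hpR1 : (1 : ℝ) < p := by exact_mod_cast hp1
  have hpR0 : (0 : ℝ) < p := by positivity
  have hpRne : (p : ℝ) ≠ 0 := ne_of_gt hpR0
  by_cases hα : ‖α‖ ≤ (p : ℝ)⁻¹
  · exact ⟨0, ⟨0, fun _ => 0, fun _ => by show 0 < p; omega, by simp⟩, by simpa using hα⟩
  · push_neg at hα
    have hα0 : α ≠ 0 := by
      rintro rfl
      simp only [norm_zero] at hα
      exact (inv_pos.mpr hpR0).not_gt hα
    have hvle : α.valuation ≤ 0 := by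
      by_contra hcon
      push_neg at hcon
      have h1 : ‖α‖ ≤ (p : ℝ)⁻¹ := by
        rw [Padic.norm_eq_zpow_neg_valuation hα0, ← zpow_neg_one]
        exact zpow_le_zpow_right₀ hpR1.le (by omega)
      exact absurd h1 (not_le.mpr hα)
    set N : ℕ := (-α.valuation).toNat with hNdef
    have hN : (N : ℤ) = -α.valuation := Int.toNat_of_nonneg (by omega)
    have hβnorm : ‖α * (p : ℚ_[p]) ^ N‖ ≤ 1 := by
      rw [norm_mul, Padic.norm_eq_zpow_neg_valuation hα0, Padic.norm_p_pow, ← zpow_add₀ hpRne]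
      have h2 : -α.valuation + -(N : ℤ) = 0 := by omega
      rw [h2, zpow_zero]
    set z : ℤ_[p] := ⟨α * (p : ℚ_[p]) ^ N, hβnorm⟩ with hz
    set a : ℕ := z.appr (N + 1) with ha
    have halt : a < p ^ (N + 1) := PadicInt.appr_lt z (N + 1)
    have hspec : ‖z - (a : ℤ_[p])‖ ≤ (p : ℝ) ^ (-(((N + 1 : ℕ)) : ℤ)) :=
      (PadicInt.norm_le_pow_iff_mem_span_pow (z - (a : ℤ_[p])) (N + 1)).mpr
        (PadicInt.appr_spec (N + 1) z)
    have hQspec : ‖α * (p : ℚ_[p]) ^ N - (a : ℚ_[p])‖ ≤ (p : ℝ) ^ (-(((N + 1 : ℕ)) : ℤ)) := by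
      have hcoe : ((z - (a : ℤ_[p]) : ℤ_[p]) : ℚ_[p]) = α * (p : ℚ_[p]) ^ N - (a : ℚ_[p]) := by
        push_cast [hz]
        rfl
      rwa [PadicInt.norm_def, hcoe] at hspec
    refine ⟨(a : ℚ) / (p : ℚ) ^ N, ⟨N, fun n => a / p ^ (N - n) % p,
      fun n => Nat.mod_lt _ (by omega), ?_⟩, ?_⟩
    · symm
      rw [← Finset.sum_range_reflect]
      have hterm : ∀ j ∈ Finset.range (N + 1),
          ((a / p ^ (N - (N + 1 - 1 - j)) % p : ℕ) : ℚ) / (p : ℚ) ^ (N + 1 - 1 - j) =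
          (((a / p ^ j % p) * p ^ j : ℕ) : ℚ) / (p : ℚ) ^ N := by
        intro j hj
        rw [Finset.mem_range] at hj
        have h1 : N + 1 - 1 - j = N - j := by omega
        have h2 : N - (N - j) = j := by omega
        rw [h1, h2, pow_sub₀ (p : ℚ) (by positivity) (by omega)]
        push_cast
        field_simp
      rw [Finset.sum_congr rfl hterm, ← Finset.sum_div, ← Nat.cast_sum,
        sum_digits_eq_mod, Nat.mod_eq_of_lt halt]
    · have hcast : (((a : ℚ) / (p : ℚ) ^ N : ℚ) : ℚ_[p]) = (a : ℚ_[p]) / (p : ℚ_[p]) ^ N := by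
        push_cast
        ring
      have hpPne : (p : ℚ_[p]) ≠ 0 := Nat.cast_ne_zero.mpr (by omega)
      have hform : α - (a : ℚ_[p]) / (p : ℚ_[p]) ^ N
          = (α * (p : ℚ_[p]) ^ N - a) / (p : ℚ_[p]) ^ N := by
        field_simp
      rw [hcast, hform, norm_div, Padic.norm_p_pow]
      calc ‖α * (p : ℚ_[p]) ^ N - (a : ℚ_[p])‖ / (p : ℝ) ^ (-(N : ℤ))
          ≤ (p : ℝ) ^ (-(((N + 1 : ℕ)) : ℤ)) / (p : ℝ) ^ (-(N : ℤ)) := by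
            gcongr
        _ = (p : ℝ)⁻¹ := by
            rw [← zpow_sub₀ hpRne, ← zpow_neg_one]
            congr 1
            push_cast
            ring

lemma isIntegralPart_padicFloor (α : ℚ_[p]) : IsIntegralPart p α (padicFloor p α) := by
  rw [padicFloor, dif_pos (exists_isIntegralPart p α)]
  exact (exists_isIntegralPart p α).choose_spec

theorem param_hyperbolic (m : ℕ) (hm : 0 < m) (ℓ : ℕ∞) (x : Fin m → ℚ_[p])
    (hx : x ∈ Dm' p m) :
    Hyperbolic p ⟨0, hm⟩ (finRotate m) (pParam p ℓ x) (qParam p ℓ x) := by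
  obtain ⟨m', rfl⟩ : ∃ m', m = m' + 1 := ⟨m - 1, by omega⟩
  have hp1 : 1 < p := (Fact.out : p.Prime).one_lt
  have hpR1 : (1 : ℝ) < p := by exact_mod_cast hp1
  have hpR0 : (0 : ℝ) < p := by positivity
  have hpRne : (p : ℝ) ≠ 0 := ne_of_gt hpR0
  have hpQ0 : (p : ℚ) ≠ 0 := by positivity
  have hpP0 : (p : ℚ_[p]) ≠ 0 := Nat.cast_ne_zero.mpr (by omega)
  obtain ⟨hDm, hpZ⟩ := hx
  -- all coordinates are nonzero
  have hxne : ∀ j, x j ≠ 0 := by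
    intro j hj
    have h := hDm 0 (fun i => if i = j then 1 else 0) ?_
    · simpa using h.2 j
    · simp [apply_ite (fun z : ℤ => (z : ℚ_[p])), ite_mul, hj]
  have hval1 : ∀ j, 1 ≤ (x j).valuation := by
    intro j
    have h : ‖x j‖ ≤ (p : ℝ)⁻¹ := hpZ j
    rw [Padic.norm_eq_zpow_neg_valuation (hxne j), ← zpow_neg_one] at h
    have := (zpow_le_zpow_iff_right₀ hpR1).mp h
    omega
  have hv0 : 1 ≤ (x ⟨0, hm⟩).valuation := hval1 _
  set v0 : ℤ := (x ⟨0, hm⟩).valuation with hv0def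
  have hσs : (finRotate (m' + 1))⁻¹ (⟨0, hm⟩ : Fin (m' + 1)) = ⟨m', by omega⟩ := by
    have h1 : finRotate (m' + 1) ⟨m', by omega⟩ = (⟨0, hm⟩ : Fin (m' + 1)) := finRotate_last'
    rw [← h1, Equiv.Perm.inv_def, Equiv.symm_apply_apply]
  -- valuation of powers of p
  have hvalppow : ∀ e : ℤ, padicValRat p ((p : ℚ) ^ e) = e := by
    intro e
    have hc : (((p : ℚ) ^ e : ℚ) : ℚ_[p]) = (p : ℚ_[p]) ^ e := by push_cast; ring
    rw [← Padic.valuation_ratCast (p := p), hc]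
    have hne : (p : ℚ_[p]) ^ e ≠ 0 := zpow_ne_zero _ hpP0
    have h2 := Padic.norm_eq_zpow_neg_valuation hne
    rw [Padic.norm_p_zpow] at h2
    have := (zpow_right_inj₀ hpR0 (ne_of_gt hpR1)).mp h2
    omega
  have hqvalrat : ∀ q : ℚ, padicValRat p q = ((q : ℚ_[p])).valuation :=
    fun q => (Padic.valuation_ratCast q).symm
  -- structure of pParam
  have hpv : ∀ k : Fin (m' + 1), ∃ e : ℤ, pParam p ℓ x k = (p : ℚ) ^ e ∧ 0 ≤ e ∧ e ≤ v0 ∧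
      (¬((k : ℕ) + 1 = m' + 1) → e + 1 ≤ v0) := by
    intro k
    induction ℓ using WithTop.recTopCoe with
    | top => exact ⟨0, by unfold pParam; exact if_pos rfl, le_refl _, by omega, fun _ => by omega⟩
    | coe n =>
      by_cases hk : (k : ℕ) + 1 = m' + 1
      · refine ⟨max (-(n : ℤ) + v0) 0, ?_, le_max_right _ _, by omega, fun h => absurd hk h⟩
        simp only [pParam, if_neg (WithTop.coe_ne_top (a := n)), dif_pos hk, WithTop.untopD_coe]
        exact if_neg (by intro h; cases h)
      · refine ⟨max (-(n : ℤ) - (x ⟨(k : ℕ) + 1,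
          lt_of_le_of_ne (Nat.succ_le_of_lt k.isLt) hk⟩).valuation + v0) 0, ?_,
          le_max_right _ _, ?_, ?_⟩
        · simp only [pParam, if_neg (WithTop.coe_ne_top (a := n)), dif_neg hk, WithTop.untopD_coe]
          exact if_neg (by intro h; cases h)
        · have := hval1 ⟨(k : ℕ) + 1, lt_of_le_of_ne (Nat.succ_le_of_lt k.isLt) hk⟩
          omega
        · intro _
          have := hval1 ⟨(k : ℕ) + 1, lt_of_le_of_ne (Nat.succ_le_of_lt k.isLt) hk⟩
          omega
  -- structure of qParam
  have hqs : qParam p ℓ x ⟨m', by omega⟩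
      = padicFloor p (((pParam p ℓ x ⟨m', by omega⟩ : ℚ) : ℚ_[p]) / x ⟨0, hm⟩) := by
    simp only [qParam]
    rw [dif_pos trivial]
  have hqk : ∀ (k : Fin (m' + 1)) (hk : ¬((k : ℕ) + 1 = m' + 1)),
      qParam p ℓ x k = padicFloor p (((pParam p ℓ x k : ℚ) : ℚ_[p]) *
        x ⟨(k : ℕ) + 1, lt_of_le_of_ne (Nat.succ_le_of_lt k.isLt) hk⟩ / x ⟨0, hm⟩) := by
    intro k hk
    simp only [qParam]
    rw [dif_neg hk]
  -- ultrametric facts about the floor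
  have nonarch : ∀ a b : ℚ_[p], ‖a - b‖ ≤ max ‖a‖ ‖b‖ := by
    intro a b
    simpa [sub_eq_add_neg] using Padic.nonarchimedean a (-b)
  have hfloor : ∀ y : ℚ_[p], ‖y - (padicFloor p y : ℚ_[p])‖ ≤ (p : ℝ)⁻¹ :=
    fun y => (isIntegralPart_padicFloor p y).2
  have hfloor_le : ∀ (y : ℚ_[p]) (c : ℤ), ‖y‖ ≤ (p : ℝ) ^ c → -1 ≤ c →
      ‖((padicFloor p y : ℚ) : ℚ_[p])‖ ≤ (p : ℝ) ^ c := by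
    intro y c hy hc
    have h1 : ‖((padicFloor p y : ℚ) : ℚ_[p])‖ ≤ max ‖y‖ ‖y - (padicFloor p y : ℚ_[p])‖ := by
      have h2 := nonarch y (y - (padicFloor p y : ℚ_[p]))
      simpa using h2
    refine h1.trans (max_le hy ((hfloor y).trans ?_))
    rw [← zpow_neg_one]
    exact zpow_le_zpow_right₀ hpR1.le hc
  have hfloor_eq : ∀ y : ℚ_[p], 1 ≤ ‖y‖ →
      padicFloor p y ≠ 0 ∧ ‖((padicFloor p y : ℚ) : ℚ_[p])‖ = ‖y‖ := by
    intro y hy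
    have hinv1 : (p : ℝ)⁻¹ < 1 := inv_lt_one_of_one_lt₀ hpR1
    have hlt : ‖y - (padicFloor p y : ℚ_[p])‖ < ‖y‖ :=
      lt_of_le_of_lt (hfloor y) (lt_of_lt_of_le hinv1 hy)
    constructor
    · intro h0
      rw [h0] at hlt
      simp at hlt
    · have hle : ‖((padicFloor p y : ℚ) : ℚ_[p])‖ ≤ ‖y‖ := by
        have h2 := nonarch y (y - (padicFloor p y : ℚ_[p]))
        simp only [sub_sub_cancel] at h2
        exact h2.trans (max_le le_rfl hlt.le)
      have hge : ‖y‖ ≤ ‖((padicFloor p y : ℚ) : ℚ_[p])‖ := by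
        have hsum : ((padicFloor p y : ℚ) : ℚ_[p]) + (y - (padicFloor p y : ℚ_[p])) = y := by
          ring
        have h2 := Padic.nonarchimedean ((padicFloor p y : ℚ) : ℚ_[p])
          (y - (padicFloor p y : ℚ_[p]))
        rw [hsum] at h2
        rcases le_max_iff.mp h2 with h | h
        · exact h
        · exact absurd h (not_le.mpr hlt)
      exact le_antisymm hle hge
  -- main computation at the special index s = ⟨m', _⟩
  obtain ⟨es, hpes, hes0, hesv0, -⟩ := hpv ⟨m', by omega⟩
  have hAsnorm : ‖((pParam p ℓ x ⟨m', by omega⟩ : ℚ) : ℚ_[p]) / x ⟨0, hm⟩‖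
      = (p : ℝ) ^ (v0 - es) := by
    rw [hpes, show (((p : ℚ) ^ es : ℚ) : ℚ_[p]) = (p : ℚ_[p]) ^ es by push_cast; ring,
      norm_div, Padic.norm_p_zpow, Padic.norm_eq_zpow_neg_valuation (hxne ⟨0, hm⟩), ← hv0def,
      ← zpow_sub₀ hpRne]
    congr 1
    ring
  have hAs1 : (1 : ℝ) ≤ ‖((pParam p ℓ x ⟨m', by omega⟩ : ℚ) : ℚ_[p]) / x ⟨0, hm⟩‖ := by
    rw [hAsnorm, show (1 : ℝ) = (p : ℝ) ^ (0 : ℤ) by simp]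
    exact zpow_le_zpow_right₀ hpR1.le (by omega)
  obtain ⟨hqs0, hqsnorm⟩ := hfloor_eq _ hAs1
  rw [← hqs] at hqs0 hqsnorm
  have hqsval : padicValRat p (qParam p ℓ x ⟨m', by omega⟩) = es - v0 := by
    rw [hqvalrat]
    have h2 := Padic.norm_eq_zpow_neg_valuation
      (show ((qParam p ℓ x ⟨m', by omega⟩ : ℚ) : ℚ_[p]) ≠ 0 from Rat.cast_ne_zero.mpr hqs0)
    rw [hqsnorm, hAsnorm] at h2
    have := (zpow_right_inj₀ hpR0 (ne_of_gt hpR1)).mp h2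
    omega
  have hkey : padicValRat p (pParam p ℓ x ⟨m', by omega⟩ / qParam p ℓ x ⟨m', by omega⟩)
      = v0 := by
    rw [padicValRat.div (by rw [hpes]; exact zpow_ne_zero _ hpQ0) hqs0, hqsval, hpes, hvalppow]
    ring
  -- assemble
  unfold Hyperbolic
  rw [hσs]
  refine ⟨?_, ⟨hqs0, by rw [hqsval]; omega, by rw [hkey]; omega⟩, ?_, ?_⟩
  · intro k
    obtain ⟨e, hpe, he0, -, -⟩ := hpv k
    rw [hpe]
    exact ⟨zpow_ne_zero _ hpQ0, by rw [hvalppow]; exact he0⟩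
  · -- condition (iii)
    intro k hk hqk0 _
    have hk' : ¬((k : ℕ) + 1 = m' + 1) := by
      intro h
      exact hk (Fin.ext (by simp only [Fin.val_mk]; omega))
    rw [hkey]
    obtain ⟨e, hpe, he0, hev0, hev1⟩ := hpv k
    have he1 : e + 1 ≤ v0 := hev1 hk'
    have hq_eq := hqk k hk'
    have hvk : 1 ≤ (x ⟨(k : ℕ) + 1, lt_of_le_of_ne (Nat.succ_le_of_lt k.isLt) hk'⟩).valuation :=
      hval1 _
    have hynorm : ‖((pParam p ℓ x k : ℚ) : ℚ_[p]) *
        x ⟨(k : ℕ) + 1, lt_of_le_of_ne (Nat.succ_le_of_lt k.isLt) hk'⟩ / x ⟨0, hm⟩‖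
        = (p : ℝ) ^ (v0 - e -
          (x ⟨(k : ℕ) + 1, lt_of_le_of_ne (Nat.succ_le_of_lt k.isLt) hk'⟩).valuation) := by
      rw [hpe, show (((p : ℚ) ^ e : ℚ) : ℚ_[p]) = (p : ℚ_[p]) ^ e by push_cast; ring,
        norm_div, norm_mul, Padic.norm_p_zpow,
        Padic.norm_eq_zpow_neg_valuation (hxne ⟨(k : ℕ) + 1, lt_of_le_of_ne (Nat.succ_le_of_lt k.isLt) hk'⟩),
        Padic.norm_eq_zpow_neg_valuation (hxne ⟨0, hm⟩), ← hv0def,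
        ← zpow_add₀ hpRne, ← zpow_sub₀ hpRne]
      congr 1
      ring
    have hyle : ‖((pParam p ℓ x k : ℚ) : ℚ_[p]) *
        x ⟨(k : ℕ) + 1, lt_of_le_of_ne (Nat.succ_le_of_lt k.isLt) hk'⟩ / x ⟨0, hm⟩‖
        ≤ (p : ℝ) ^ (v0 - e - 1) := by
      rw [hynorm]
      exact zpow_le_zpow_right₀ hpR1.le (by omega)
    have hqnorm : ‖((qParam p ℓ x k : ℚ) : ℚ_[p])‖ ≤ (p : ℝ) ^ (v0 - e - 1) := by
      rw [hq_eq]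
      exact hfloor_le _ _ hyle (by omega)
    have h2 := Padic.norm_eq_zpow_neg_valuation
      (show ((qParam p ℓ x k : ℚ) : ℚ_[p]) ≠ 0 from Rat.cast_ne_zero.mpr hqk0)
    rw [h2] at hqnorm
    have h3 := (zpow_le_zpow_iff_right₀ hpR1).mp hqnorm
    rw [padicValRat.div (by rw [hpe]; exact zpow_ne_zero _ hpQ0) hqk0, hpe, hvalppow,
      hqvalrat]
    omega
  · -- condition (iv)
    intro k hk _
    have hk' : ¬((k : ℕ) + 1 = m' + 1) := by
      intro h
      exact hk (Fin.ext (by simp only [Fin.val_mk]; omega))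
    rw [hkey]
    obtain ⟨e, hpe, -, -, hev1⟩ := hpv k
    rw [hpe, hvalppow]
    have := hev1 hk'
    omega


end PadicCF
end
end
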